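/- Assume sin(π(sin θ_n − sin θ_i)/2) ≠ 0 for all pairs n ≠ i. Then for every M and every n, the (n,n) entry of H̄^H H̄ equals M, and as M → ∞ the matrix (1/M)·H̄^H H̄ converges entrywise to the N×N identity matrix. -/

import Mathlib

open Filter Matrix

/-- The `M×N` steering matrix with entries `[H̄]_{mn} = exp(−i(m−1)π sin θ_n)`, `m = 1,…,M`. -/
noncomputable def steer {N : ℕ} (θ : Fin N → ℝ) (M : ℕ) : Matrix (Fin M) (Fin N) ℂ :=
  fun m n => Complex.exp (-Complex.I * ((m : ℕ) : ℂ) * (Real.pi : ℂ) * (Real.sin (θ n) : ℂ))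

lemma steer_gram {N : ℕ} (θ : Fin N → ℝ) (M : ℕ) (n i : Fin N) :
    ((steer θ M)ᴴ * steer θ M) n i
      = ∑ m ∈ Finset.range M,
          (Complex.exp (Complex.I * ((Real.pi : ℂ) * ((Real.sin (θ n) : ℂ) - (Real.sin (θ i) : ℂ))))) ^ m := by
  rw [Matrix.mul_apply, ← Fin.sum_univ_eq_sum_range]
  congr 1
  ext m
  rw [Matrix.conjTranspose_apply]
  show (starRingEnd ℂ) (steer θ M m n) * steer θ M m i = _
  rw [← Complex.exp_nat_mul]
  simp only [steer, ← Complex.exp_conj, ← Complex.exp_add]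
  congr 1
  simp only [_root_.map_mul, map_neg, Complex.conj_I, Complex.conj_ofReal, map_natCast]
  ring

theorem steering_gram_identity_limit
    (N : ℕ) (hN : 1 ≤ N) (θ : Fin N → ℝ)
    (hθ : ∀ n i : Fin N, n ≠ i →
      Real.sin (Real.pi * (Real.sin (θ n) - Real.sin (θ i)) / 2) ≠ 0) :
    (∀ (M : ℕ) (n : Fin N), ((steer θ M)ᴴ * steer θ M) n n = (M : ℂ)) ∧
    (∀ n i : Fin N,
      Filter.Tendsto (fun M : ℕ => ((M : ℂ))⁻¹ * (((steer θ M)ᴴ * steer θ M) n i))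
        Filter.atTop (nhds ((1 : Matrix (Fin N) (Fin N) ℂ) n i))) := by
  have hdiag : ∀ (M : ℕ) (n : Fin N), ((steer θ M)ᴴ * steer θ M) n n = (M : ℂ) := by
    intro M n
    rw [steer_gram]
    simp
  refine ⟨hdiag, ?_⟩
  intro n i
  by_cases hni : n = i
  · subst hni
    rw [Matrix.one_apply_eq]
    have : (fun M : ℕ => ((M : ℂ))⁻¹ * (((steer θ M)ᴴ * steer θ M) n n))
        =ᶠ[atTop] (fun _ => (1 : ℂ)) := by
      filter_upwards [eventually_ge_atTop 1] with M hM
      rw [hdiag]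
      have : (M : ℂ) ≠ 0 := Nat.cast_ne_zero.mpr (by omega)
      field_simp
    exact Tendsto.congr' this.symm tendsto_const_nhds
  · rw [Matrix.one_apply_ne hni]
    set a : ℝ := Real.pi * (Real.sin (θ n) - Real.sin (θ i)) with ha
    set z : ℂ := Complex.exp (Complex.I * (a : ℂ)) with hz
    have hgram : ∀ M : ℕ, ((steer θ M)ᴴ * steer θ M) n i = ∑ m ∈ Finset.range M, z ^ m := by
      intro M; rw [steer_gram]; norm_num [hz, ha]
    have hz1 : z ≠ 1 := by
      intro h
      rw [hz, Complex.exp_eq_one_iff] at h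
      obtain ⟨k, hk⟩ := h
      have haeq : (a : ℂ) = (k : ℂ) * (2 * Real.pi) := by
        have hI : (Complex.I : ℂ) ≠ 0 := Complex.I_ne_zero
        have : Complex.I * (a : ℂ) = Complex.I * ((k : ℂ) * (2 * Real.pi)) := by
          rw [hk]; ring
        exact mul_left_cancel₀ hI this
      have haR : a = (k : ℝ) * (2 * Real.pi) := by
        exact_mod_cast haeq
      apply hθ n i hni
      have : Real.pi * (Real.sin (θ n) - Real.sin (θ i)) / 2 = (k : ℝ) * Real.pi := by
        rw [← ha, haR]; ring
      rw [this]
      exact Real.sin_int_mul_pi k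
    have hznorm : ‖z‖ = 1 := by
      rw [hz]
      rw [Complex.norm_exp]
      norm_num [Complex.mul_re]
    have hkey : Tendsto (fun M : ℕ => ((M : ℂ))⁻¹ * ∑ m ∈ Finset.range M, z ^ m)
        atTop (nhds 0) := by
      rw [tendsto_zero_iff_norm_tendsto_zero]
      have hden : (0 : ℝ) < ‖z - 1‖ := by
        rw [norm_pos_iff]; intro h; exact hz1 (sub_eq_zero.mp h)
      apply squeeze_zero (fun M => norm_nonneg _)
        (g := fun M : ℕ => (2 / ‖z - 1‖) * (M : ℝ)⁻¹)
      · intro M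
        rw [geom_sum_eq hz1, norm_mul, norm_div]
        have h1 : ‖z ^ M - 1‖ ≤ 2 := by
          calc ‖z ^ M - 1‖ ≤ ‖z ^ M‖ + ‖(1 : ℂ)‖ := norm_sub_le _ _
          _ = 2 := by rw [norm_pow, hznorm]; norm_num
        have h2 : ‖((M : ℂ))⁻¹‖ = (M : ℝ)⁻¹ := by
          rw [norm_inv, Complex.norm_natCast]
        rw [h2]
        calc (M : ℝ)⁻¹ * (‖z ^ M - 1‖ / ‖z - 1‖) ≤ (M : ℝ)⁻¹ * (2 / ‖z - 1‖) := by
              gcongr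
          _ = (2 / ‖z - 1‖) * (M : ℝ)⁻¹ := by ring
      · have := tendsto_inv_atTop_nhds_zero_nat (𝕜 := ℝ)
        simpa using this.const_mul (2 / ‖z - 1‖)
    apply hkey.congr
    intro M
    rw [hgram]
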